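/- Let T be the set of all functions r whose domain is a countable ordinal and whose values lie in ω, such that r is injective on the successor ordinals in its domain with values in ω \ {0}, and r takes the value 0 at 0 and at every limit ordinal in its domain; order T by function extension. Then T is a well-stratified tree (every branch is order-isomorphic to an ordinal), every branch of T is countable, and T admits no strictly order-preserving function into ℝ. -/

import Mathlib

universe u

/-- A tree order: a partial order with a minimum element in which the set of
predecessors of any element is a chain. -/
def IsTreeOrder (X : Type u) [PartialOrder X] : Prop :=
  (∃ r : X, ∀ x : X, r ≤ x) ∧ ∀ x : X, IsChain (· ≤ ·) {y : X | y ≤ x}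

/-- A branch: a maximal chain. -/
def IsBranch {X : Type u} [PartialOrder X] (B : Set X) : Prop :=
  IsMaxChain (· ≤ ·) B

/-- The tree `T`: functions from a countable ordinal `dom` into `ω` (coded as total
functions on the ordinals vanishing outside `dom`) which are injective with nonzero
values on the successor ordinals in their domain, and zero at `0` and at every limit
ordinal in their domain. -/
@[ext]
structure TTree : Type 1 where
  dom : Ordinal.{0}
  fn : Ordinal.{0} → ℕ
  dom_lt : dom < (Cardinal.aleph 1).ord
  zero_outside : ∀ β : Ordinal, ¬ β < dom → fn β = 0
  succ_ne_zero : ∀ β : Ordinal, β < dom → (∃ γ : Ordinal, β = γ + 1) → fn β ≠ 0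
  succ_inj : ∀ β γ : Ordinal, β < dom → γ < dom → (∃ β' : Ordinal, β = β' + 1) →
    (∃ γ' : Ordinal, γ = γ' + 1) → fn β = fn γ → β = γ
  zero_or_limit : ∀ β : Ordinal, β < dom → (β = 0 ∨ Order.IsSuccLimit β) → fn β = 0

/-- `T` is ordered by function extension. -/
instance : PartialOrder TTree where
  le r s := r.dom ≤ s.dom ∧ ∀ β : Ordinal, β < r.dom → s.fn β = r.fn β
  le_refl r := ⟨le_rfl, fun _ _ => rfl⟩
  le_trans r s t hrs hst :=
    ⟨hrs.1.trans hst.1, fun β hβ => (hst.2 β (hβ.trans_le hrs.1)).trans (hrs.2 β hβ)⟩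
  le_antisymm r s hrs hsr := by
    have hd : r.dom = s.dom := le_antisymm hrs.1 hsr.1
    have hf : r.fn = s.fn := by
      funext β
      by_cases hβ : β < r.dom
      · exact (hrs.2 β hβ).symm
      · rw [r.zero_outside β hβ, s.zero_outside β (by rwa [← hd])]
    ext : 1
    · exact hd
    · exact hf

namespace TTree

lemma le_def {x y : TTree} : x ≤ y ↔ x.dom ≤ y.dom ∧ ∀ β : Ordinal, β < x.dom → y.fn β = x.fn β :=
  Iff.rfl

lemma dom_mono {x y : TTree} (h : x ≤ y) : x.dom ≤ y.dom := h.1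

lemma fn_eq_of_le {x y : TTree} (h : x ≤ y) {β : Ordinal} (hβ : β < x.dom) : y.fn β = x.fn β :=
  h.2 β hβ

lemma eq_of_le_of_dom_le {x y : TTree} (h : x ≤ y) (hd : y.dom ≤ x.dom) : x = y := by
  have hdd : x.dom = y.dom := le_antisymm h.1 hd
  refine le_antisymm h ⟨hd, fun β hβ => (h.2 β (hβ.trans_le hd)).symm⟩

/-- comparability of two elements below a common upper bound -/
lemma le_of_common_ub {x y z : TTree} (hx : x ≤ z) (hy : y ≤ z) (hd : x.dom ≤ y.dom) : x ≤ y :=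
  ⟨hd, fun β hβ => (hy.2 β (hβ.trans_le hd)).symm.trans (hx.2 β hβ)⟩

noncomputable def root : TTree where
  dom := 0
  fn := fun _ => 0
  dom_lt := by
    have : Order.IsSuccLimit (Cardinal.aleph 1).ord := Cardinal.isSuccLimit_ord (Cardinal.aleph0_le_aleph 1)
    exact this.pos
  zero_outside := fun _ _ => rfl
  succ_ne_zero := fun β hβ _ => absurd hβ (by simp)
  succ_inj := fun β γ hβ _ _ _ _ => absurd hβ (by simp)
  zero_or_limit := fun _ _ _ => rfl

lemma root_le (x : TTree) : root ≤ x := ⟨zero_le, fun β hβ => absurd hβ (by simp [root])⟩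

lemma isTreeOrder : IsTreeOrder TTree := by
  constructor
  · exact ⟨root, root_le⟩
  · intro x y hy z hz hne
    rcases le_total y.dom z.dom with h | h
    · exact Or.inl (le_of_common_ub hy hz h)
    · exact Or.inr (le_of_common_ub hz hy h)


lemma chain_total {B : Set TTree} (hB : IsChain (· ≤ ·) B) {x y : TTree}
    (hx : x ∈ B) (hy : y ∈ B) : x ≤ y ∨ y ≤ x := by
  rcases eq_or_ne x y with rfl | h
  · exact Or.inl le_rfl
  · exact hB hx hy h

lemma eq_of_mem_of_dom_eq {B : Set TTree} (hB : IsChain (· ≤ ·) B) {x y : TTree}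
    (hx : x ∈ B) (hy : y ∈ B) (h : x.dom = y.dom) : x = y := by
  rcases chain_total hB hx hy with hle | hle
  · exact eq_of_le_of_dom_le hle h.ge
  · exact (eq_of_le_of_dom_le hle h.le).symm

open Classical in
noncomputable def chainVal (B : Set TTree) (β : Ordinal) : ℕ :=
  if h : ∃ x ∈ B, β < x.dom then h.choose.fn β else 0

lemma chainVal_eq {B : Set TTree} (hB : IsChain (· ≤ ·) B) {x : TTree} (hx : x ∈ B)
    {β : Ordinal} (hβ : β < x.dom) : chainVal B β = x.fn β := by
  have h : ∃ y ∈ B, β < y.dom := ⟨x, hx, hβ⟩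
  rw [chainVal, dif_pos h]
  obtain ⟨hy, hby⟩ := h.choose_spec
  rcases chain_total hB hy hx with hle | hle
  · exact (fn_eq_of_le hle hby).symm
  · exact fn_eq_of_le hle hβ

lemma chainVal_succ_inj {B : Set TTree} (hB : IsChain (· ≤ ·) B) {β γ : Ordinal}
    (hβ : ∃ x ∈ B, β < x.dom) (hγ : ∃ x ∈ B, γ < x.dom)
    (hsβ : ∃ β', β = β' + 1) (hsγ : ∃ γ', γ = γ' + 1)
    (h : chainVal B β = chainVal B γ) : β = γ := by
  obtain ⟨x, hx, hxβ⟩ := hβ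
  obtain ⟨y, hy, hyγ⟩ := hγ
  rcases chain_total hB hx hy with hle | hle
  · have hxβ' : β < y.dom := hxβ.trans_le (dom_mono hle)
    rw [chainVal_eq hB hy hxβ', chainVal_eq hB hy hyγ] at h
    exact y.succ_inj β γ hxβ' hyγ hsβ hsγ h
  · have hyγ' : γ < x.dom := hyγ.trans_le (dom_mono hle)
    rw [chainVal_eq hB hx hxβ, chainVal_eq hB hx hyγ'] at h
    exact x.succ_inj β γ hxβ hyγ' hsβ hsγ h

lemma chain_countable {B : Set TTree} (hB : IsChain (· ≤ ·) B) : B.Countable := by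
  classical
  set σ := sSup (TTree.dom '' B) with hσ
  have hbdd : BddAbove (TTree.dom '' B) := by
    refine ⟨(Cardinal.aleph 1).ord, ?_⟩
    rintro o ⟨x, _, rfl⟩
    exact x.dom_lt.le
  have hmem : ∀ x ∈ B, x.dom ≤ σ := fun x hx => le_csSup hbdd ⟨x, hx, rfl⟩
  have hlt : ∀ {β : Ordinal}, β < σ → ∃ x ∈ B, β < x.dom := by
    intro β h
    by_contra hc
    push_neg at hc
    rcases (TTree.dom '' B).eq_empty_or_nonempty with he | hne
    · rw [hσ, he, csSup_empty] at h
      exact absurd h not_lt_zero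
    · have : σ ≤ β := by
        refine csSup_le hne ?_
        rintro o ⟨x, hx, rfl⟩
        exact hc x hx
      exact absurd h this.not_gt
  have : Countable ↥B := by
    set f : ↥B → Option (Option ℕ) := fun x =>
      if x.1.dom + 1 < σ then some (some (chainVal B (x.1.dom + 1)))
      else if x.1.dom < σ then some none else none with hf
    have hinj : Function.Injective f := by
      rintro ⟨x, hx⟩ ⟨y, hy⟩ hxy
      simp only [hf] at hxy
      have hdom : x.dom = y.dom := by
        by_cases h1 : x.dom + 1 < σ
        · by_cases h2 : y.dom + 1 < σ
          · rw [if_pos h1, if_pos h2] at hxy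
            have hval : chainVal B (x.dom + 1) = chainVal B (y.dom + 1) := by
              simpa using hxy
            have := chainVal_succ_inj hB (hlt h1) (hlt h2) ⟨x.dom, rfl⟩ ⟨y.dom, rfl⟩ hval
            rw [Ordinal.add_one_eq_succ, Ordinal.add_one_eq_succ] at this
            exact Order.succ_injective this
          · exfalso
            rw [if_pos h1, if_neg h2] at hxy
            by_cases h4 : y.dom < σ <;> simp [h4] at hxy
        · by_cases h2 : y.dom + 1 < σ
          · exfalso
            rw [if_neg h1, if_pos h2] at hxy
            by_cases h3 : x.dom < σ <;> simp [h3] at hxy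
          · rw [if_neg h1, if_neg h2] at hxy
            by_cases h3 : x.dom < σ <;> by_cases h4 : y.dom < σ
            · have hxle : x.dom ≤ y.dom := by
                have : x.dom < y.dom + 1 := lt_of_lt_of_le h3 (not_lt.mp h2)
                rwa [Ordinal.add_one_eq_succ, Order.lt_succ_iff] at this
              have hyle : y.dom ≤ x.dom := by
                have : y.dom < x.dom + 1 := lt_of_lt_of_le h4 (not_lt.mp h1)
                rwa [Ordinal.add_one_eq_succ, Order.lt_succ_iff] at this
              exact le_antisymm hxle hyle
            · rw [if_pos h3, if_neg h4] at hxy; exact absurd hxy (by simp)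
            · rw [if_neg h3, if_pos h4] at hxy; exact absurd hxy (by simp)
            · exact (le_antisymm (hmem x hx) (not_lt.mp h3)).trans
                (le_antisymm (hmem y hy) (not_lt.mp h4)).symm
      exact Subtype.ext (eq_of_mem_of_dom_eq hB hx hy hdom)
    exact hinj.countable
  exact Set.countable_coe_iff.mp this

noncomputable def liftIioIso (γ : Ordinal.{u}) :
    (Set.Iio γ) ≃o (Set.Iio (Ordinal.lift.{v} γ)) := by
  refine ⟨Equiv.ofBijective (fun o : ↥(Set.Iio γ) =>
      (⟨Ordinal.lift.{v} o.1, Ordinal.lift_lt.2 o.2⟩ : ↥(Set.Iio (Ordinal.lift.{v} γ))))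
      ⟨?_, ?_⟩, ?_⟩
  · intro a b h
    exact Subtype.ext (Ordinal.lift_inj.mp (congrArg Subtype.val h))
  · rintro ⟨o, ho⟩
    obtain ⟨o', ho', rfl⟩ := Ordinal.lt_lift_iff.mp ho
    exact ⟨⟨o', ho'⟩, rfl⟩
  · intro a b
    show (⟨_, _⟩ : ↥(Set.Iio _)) ≤ ⟨_, _⟩ ↔ a ≤ b
    rw [Subtype.mk_le_mk]
    exact Ordinal.lift_le

lemma chain_iso {B : Set TTree} (hB : IsChain (· ≤ ·) B) :
    ∃ γ : Ordinal, Nonempty (B ≃o Set.Iio γ) := by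
  classical
  set σ := sSup (TTree.dom '' B) with hσ
  have hbdd : BddAbove (TTree.dom '' B) := by
    refine ⟨(Cardinal.aleph 1).ord, ?_⟩
    rintro o ⟨x, _, rfl⟩
    exact x.dom_lt.le
  have hmem : ∀ x : ↥B, x.1.dom < σ + 1 := by
    intro x
    have h1 : x.1.dom ≤ σ := le_csSup hbdd ⟨x.1, x.2, rfl⟩
    have h2 : σ < σ + 1 := by
      rw [Ordinal.add_one_eq_succ]
      exact Order.lt_succ σ
    exact h1.trans_lt h2
  let E := Ordinal.ToType.mk (o := σ + 1)
  let j : ↥B → (σ + 1).ToType := fun x => E ⟨x.1.dom, hmem x⟩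
  have hjinj : Function.Injective j := by
    intro x y h
    have hd : x.1.dom = y.1.dom := congrArg Subtype.val (E.injective h)
    exact Subtype.ext (eq_of_mem_of_dom_eq hB x.2 y.2 hd)
  have hjle : ∀ x y : ↥B, j x ≤ j y ↔ x ≤ y := by
    intro x y
    show E _ ≤ E _ ↔ _
    rw [OrderIso.le_iff_le, Subtype.mk_le_mk]
    constructor
    · intro h
      rcases chain_total hB x.2 y.2 with hle | hle
      · exact hle
      · exact ((eq_of_le_of_dom_le hle h).symm).le
    · exact fun h => dom_mono h
  have key : ∀ x : ↥B, j x ∈ Set.range j := fun x => Set.mem_range_self x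
  haveI : IsWellOrder ↥(Set.range j) ((· < ·) : ↥(Set.range j) → ↥(Set.range j) → Prop) :=
    isWellOrder_lt
  refine ⟨Ordinal.lift (Ordinal.type ((· < ·) : ↥(Set.range j) → ↥(Set.range j) → Prop)), ⟨?_⟩⟩
  refine OrderIso.trans ?_ (liftIioIso _)
  refine ⟨Equiv.ofBijective (fun x : ↥B =>
      (⟨Ordinal.typein ((· < ·) : ↥(Set.range j) → ↥(Set.range j) → Prop) ⟨j x, key x⟩,
        Ordinal.typein_lt_type _ _⟩ :
        ↥(Set.Iio (Ordinal.type ((· < ·) : ↥(Set.range j) → ↥(Set.range j) → Prop)))))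
      ⟨?_, ?_⟩, ?_⟩
  · intro a b h
    have h2 := Ordinal.typein_injective _ (congrArg Subtype.val h)
    exact hjinj (congrArg Subtype.val h2)
  · rintro ⟨o, ho⟩
    obtain ⟨a, ha⟩ := Ordinal.typein_surj _ ho
    obtain ⟨w, hw⟩ := a
    obtain ⟨x, rfl⟩ := hw
    exact ⟨x, Subtype.ext ha⟩
  · intro a b
    show (⟨_, _⟩ : ↥(Set.Iio _)) ≤ ⟨_, _⟩ ↔ a ≤ b
    refine Iff.trans (Subtype.mk_le_mk.trans (Ordinal.typein_le_typein _)) ?_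
    show ¬ (⟨j b, _⟩ : ↥(Set.range j)) < ⟨j a, _⟩ ↔ _
    rw [Subtype.mk_lt_mk, not_lt]
    exact hjle a b


lemma succ_lt_aleph1 {o : Ordinal.{0}} (h : o < (Cardinal.aleph 1).ord) :
    o + 1 < (Cardinal.aleph 1).ord := by
  rw [Ordinal.add_one_eq_succ]
  exact (Cardinal.isSuccLimit_ord (Cardinal.aleph0_le_aleph 1)).succ_lt h

lemma lt_add_one_self (o : Ordinal.{0}) : o < o + 1 := by
  rw [Ordinal.add_one_eq_succ]
  exact Order.lt_succ o

lemma lt_dom_of_lt_add_one {x : TTree} {β : Ordinal}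
    (h : β < x.dom + 1) (hne : β ≠ x.dom) : β < x.dom := by
  rw [Ordinal.add_one_eq_succ, Order.lt_succ_iff] at h
  exact h.lt_of_ne hne

/-- The set of nonzero values used by `x`. -/
def used (x : TTree) : Set ℕ := {n : ℕ | n ≠ 0 ∧ ∃ β : Ordinal, x.fn β = n}

lemma mem_used {x : TTree} {β : Ordinal} (h : x.fn β ≠ 0) : x.fn β ∈ used x :=
  ⟨h, β, rfl⟩

lemma used_mono {x y : TTree} (h : x ≤ y) : used x ⊆ used y := by
  rintro n ⟨hn, β, rfl⟩
  have hβ : β < x.dom := by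
    by_contra hc
    exact hn (x.zero_outside β hc)
  exact ⟨hn, β, fn_eq_of_le h hβ⟩

open Classical in
/-- Extend `x` by one position, using the value `v` if the new position is a
successor ordinal (and `0` otherwise). -/
noncomputable def step (x : TTree) (v : ℕ) (hv : v ≠ 0) (hvu : v ∉ used x) : TTree where
  dom := x.dom + 1
  fn := fun β => if β = x.dom ∧ ∃ γ : Ordinal, x.dom = γ + 1 then v else x.fn β
  dom_lt := succ_lt_aleph1 x.dom_lt
  zero_outside := by
    intro β hβ
    have h1 : ¬(β = x.dom ∧ ∃ γ : Ordinal, x.dom = γ + 1) := by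
      rintro ⟨h, -⟩
      exact hβ (h ▸ lt_add_one_self x.dom)
    have h2 : ¬ β < x.dom := fun h => hβ (h.trans (lt_add_one_self x.dom))
    simp only [if_neg h1]
    exact x.zero_outside β h2
  succ_ne_zero := by
    intro β hβ hs
    by_cases hc : β = x.dom ∧ ∃ γ : Ordinal, x.dom = γ + 1
    · simp only [if_pos hc]
      exact hv
    · simp only [if_neg hc]
      have h1 : β ≠ x.dom := fun h => hc ⟨h, h ▸ hs⟩
      exact x.succ_ne_zero β (lt_dom_of_lt_add_one hβ h1) hs
  succ_inj := by
    intro β γ hβ hγ hsβ hsγ h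
    by_cases hc1 : β = x.dom ∧ ∃ γ' : Ordinal, x.dom = γ' + 1 <;>
      by_cases hc2 : γ = x.dom ∧ ∃ γ' : Ordinal, x.dom = γ' + 1
    · rw [hc1.1, hc2.1]
    · exfalso
      simp only [if_pos hc1, if_neg hc2] at h
      have h2 : γ ≠ x.dom := fun hh => hc2 ⟨hh, hh ▸ hsγ⟩
      have hγ' : γ < x.dom := lt_dom_of_lt_add_one hγ h2
      refine hvu ?_
      rw [h]
      exact mem_used (x.succ_ne_zero γ hγ' hsγ)
    · exfalso
      simp only [if_neg hc1, if_pos hc2] at h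
      have h2 : β ≠ x.dom := fun hh => hc1 ⟨hh, hh ▸ hsβ⟩
      have hβ' : β < x.dom := lt_dom_of_lt_add_one hβ h2
      refine hvu ?_
      rw [← h]
      exact mem_used (x.succ_ne_zero β hβ' hsβ)
    · simp only [if_neg hc1, if_neg hc2] at h
      have h2 : β ≠ x.dom := fun hh => hc1 ⟨hh, hh ▸ hsβ⟩
      have h3 : γ ≠ x.dom := fun hh => hc2 ⟨hh, hh ▸ hsγ⟩
      exact x.succ_inj β γ (lt_dom_of_lt_add_one hβ h2) (lt_dom_of_lt_add_one hγ h3) hsβ hsγ h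
  zero_or_limit := by
    intro β hβ hz
    have h1 : ¬(β = x.dom ∧ ∃ γ : Ordinal, x.dom = γ + 1) := by
      rintro ⟨h, γ', hγ'⟩
      have hs : β = γ' + 1 := h.trans hγ'
      rcases hz with hz | hz
      · rw [hz, Ordinal.add_one_eq_succ] at hs
        exact (Order.succ_ne_bot γ') hs.symm
      · rw [hs, Ordinal.add_one_eq_succ] at hz
        exact Order.not_isSuccLimit_succ γ' hz
    simp only [if_neg h1]
    by_cases h2 : β = x.dom
    · rw [h2]
      exact x.zero_outside x.dom (lt_irrefl _)
    · exact x.zero_or_limit β (lt_dom_of_lt_add_one hβ h2) hz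

open Classical

lemma lt_step (x : TTree) (v : ℕ) (hv : v ≠ 0) (hvu : v ∉ used x) : x < step x v hv hvu := by
  constructor
  · refine ⟨(lt_add_one_self x.dom).le, fun β hβ => ?_⟩
    have h1 : ¬(β = x.dom ∧ ∃ γ : Ordinal, x.dom = γ + 1) := by
      rintro ⟨h, -⟩
      exact absurd h (ne_of_lt hβ)
    show (if β = x.dom ∧ ∃ γ : Ordinal, x.dom = γ + 1 then v else x.fn β) = x.fn β
    rw [if_neg h1]
  · intro h
    have hle := dom_mono h
    exact absurd hle (not_le.mpr (lt_add_one_self x.dom))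

lemma step_fn_ge (x : TTree) (v : ℕ) (hv : v ≠ 0) (hvu : v ∉ used x) {β : Ordinal}
    (hβ : x.dom ≤ β) : (step x v hv hvu).fn β = 0 ∨ (step x v hv hvu).fn β = v := by
  by_cases hc : β = x.dom ∧ ∃ γ : Ordinal, x.dom = γ + 1
  · right
    show (if β = x.dom ∧ ∃ γ : Ordinal, x.dom = γ + 1 then v else x.fn β) = v
    rw [if_pos hc]
  · left
    show (if β = x.dom ∧ ∃ γ : Ordinal, x.dom = γ + 1 then v else x.fn β) = 0
    rw [if_neg hc]
    by_cases h2 : β = x.dom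
    · rw [h2]
      exact x.zero_outside x.dom (lt_irrefl _)
    · exact x.zero_outside β (not_lt.mpr hβ)

lemma used_step_subset (x : TTree) (v : ℕ) (hv : v ≠ 0) (hvu : v ∉ used x) :
    used (step x v hv hvu) ⊆ used x ∪ {v} := by
  rintro n ⟨hn, β, hβ⟩
  have hβ' : (if β = x.dom ∧ ∃ γ : Ordinal, x.dom = γ + 1 then v else x.fn β) = n := hβ
  by_cases hc : β = x.dom ∧ ∃ γ : Ordinal, x.dom = γ + 1
  · rw [if_pos hc] at hβ'
    exact Or.inr hβ'.symm
  · rw [if_neg hc] at hβ'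
    exact Or.inl ⟨hn, β, hβ'⟩

/-- Extend an element whose domain is `0` or a limit ordinal by one position,
with value `0` there (no change to the function is needed). -/
noncomputable def zstep (x : TTree) (hx : x.dom = 0 ∨ Order.IsSuccLimit x.dom) : TTree where
  dom := x.dom + 1
  fn := x.fn
  dom_lt := succ_lt_aleph1 x.dom_lt
  zero_outside := fun β hβ =>
    x.zero_outside β (fun h => hβ (h.trans (lt_add_one_self x.dom)))
  succ_ne_zero := by
    intro β hβ hs
    have h1 : β ≠ x.dom := by
      rintro rfl
      obtain ⟨γ, hγ⟩ := hs
      rcases hx with hz | hz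
      · rw [hz, Ordinal.add_one_eq_succ] at hγ
        exact (Order.succ_ne_bot γ) hγ.symm
      · rw [hγ, Ordinal.add_one_eq_succ] at hz
        exact Order.not_isSuccLimit_succ γ hz
    exact x.succ_ne_zero β (lt_dom_of_lt_add_one hβ h1) hs
  succ_inj := by
    intro β γ hβ hγ hsβ hsγ h
    have hne : ∀ δ : Ordinal, δ < x.dom + 1 → (∃ δ' : Ordinal, δ = δ' + 1) → δ ≠ x.dom := by
      rintro δ hδ ⟨δ', rfl⟩ hh
      rcases hx with hz | hz
      · rw [hz, Ordinal.add_one_eq_succ] at hh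
        exact (Order.succ_ne_bot δ') hh
      · rw [← hh, Ordinal.add_one_eq_succ] at hz
        exact Order.not_isSuccLimit_succ δ' hz
    exact x.succ_inj β γ (lt_dom_of_lt_add_one hβ (hne β hβ hsβ))
      (lt_dom_of_lt_add_one hγ (hne γ hγ hsγ)) hsβ hsγ h
  zero_or_limit := by
    intro β hβ hz
    by_cases h1 : β = x.dom
    · rw [h1]
      exact x.zero_outside x.dom (lt_irrefl _)
    · exact x.zero_or_limit β (lt_dom_of_lt_add_one hβ h1) hz

lemma lt_zstep (x : TTree) (hx : x.dom = 0 ∨ Order.IsSuccLimit x.dom) : x < zstep x hx := by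
  constructor
  · exact ⟨(lt_add_one_self x.dom).le, fun β hβ => rfl⟩
  · intro h
    exact absurd (dom_mono h) (not_le.mpr (lt_add_one_self x.dom))

lemma used_zstep (x : TTree) (hx : x.dom = 0 ∨ Order.IsSuccLimit x.dom) : used (zstep x hx) = used x :=
  rfl

/-- The limit (union) of a monotone sequence in the tree. -/
noncomputable def climit (c : ℕ → TTree) (hmono : Monotone c) : TTree where
  dom := ⨆ n, (c n).dom
  fn := fun β => if h : ∃ n, β < (c n).dom then (c h.choose).fn β else 0
  dom_lt := by
    refine Ordinal.iSup_lt_ord ?_ (fun n => (c n).dom_lt)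
    rw [Cardinal.isRegular_aleph_one.cof_eq, Cardinal.mk_nat]
    exact Cardinal.aleph0_lt_aleph_one
  zero_outside := by
    intro β hβ
    have h1 : ¬ ∃ n, β < (c n).dom := by
      rintro ⟨n, hn⟩
      exact hβ (hn.trans_le (Ordinal.le_iSup (fun n => (c n).dom) n))
    simp only [dif_neg h1]
  succ_ne_zero := by
    intro β hβ hs
    have h1 : ∃ n, β < (c n).dom := by
      rwa [Ordinal.lt_iSup_iff] at hβ
    simp only [dif_pos h1]
    exact (c h1.choose).succ_ne_zero β h1.choose_spec hs
  succ_inj := by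
    intro β γ hβ hγ hsβ hsγ h
    have h1 : ∃ n, β < (c n).dom := by
      rwa [Ordinal.lt_iSup_iff] at hβ
    have h2 : ∃ n, γ < (c n).dom := by
      rwa [Ordinal.lt_iSup_iff] at hγ
    simp only [dif_pos h1, dif_pos h2] at h
    set n := max h1.choose h2.choose with hn
    have hβ' : β < (c n).dom := h1.choose_spec.trans_le (dom_mono (hmono (le_max_left _ _)))
    have hγ' : γ < (c n).dom := h2.choose_spec.trans_le (dom_mono (hmono (le_max_right _ _)))
    have e1 : (c n).fn β = (c h1.choose).fn β := fn_eq_of_le (hmono (le_max_left _ _)) h1.choose_spec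
    have e2 : (c n).fn γ = (c h2.choose).fn γ := fn_eq_of_le (hmono (le_max_right _ _)) h2.choose_spec
    exact (c n).succ_inj β γ hβ' hγ' hsβ hsγ (by rw [e1, e2, h])
  zero_or_limit := by
    intro β hβ hz
    have h1 : ∃ n, β < (c n).dom := by
      rwa [Ordinal.lt_iSup_iff] at hβ
    simp only [dif_pos h1]
    exact (c h1.choose).zero_or_limit β h1.choose_spec hz

lemma climit_fn_eq (c : ℕ → TTree) (hmono : Monotone c) {n : ℕ} {β : Ordinal}
    (hβ : β < (c n).dom) : (climit c hmono).fn β = (c n).fn β := by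
  have h1 : ∃ m, β < (c m).dom := ⟨n, hβ⟩
  show (if h : ∃ m, β < (c m).dom then (c h.choose).fn β else 0) = (c n).fn β
  rw [dif_pos h1]
  rcases le_total h1.choose n with hle | hle
  · exact (fn_eq_of_le (hmono hle) h1.choose_spec).symm
  · exact fn_eq_of_le (hmono hle) hβ

lemma le_climit (c : ℕ → TTree) (hmono : Monotone c) (n : ℕ) : c n ≤ climit c hmono := by
  refine ⟨Ordinal.le_iSup (fun n => (c n).dom) n, fun β hβ => climit_fn_eq c hmono hβ⟩

lemma climit_dom_isLimit (c : ℕ → TTree) (hmono : Monotone c)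
    (hstrict : ∀ n, c n < c (n + 1)) : Order.IsSuccLimit ((climit c hmono).dom) := by
  have hd : ∀ n, (c n).dom < (c (n + 1)).dom := by
    intro n
    rcases lt_or_eq_of_le (dom_mono (hstrict n).le) with h | h
    · exact h
    · exact absurd (eq_of_le_of_dom_le (hstrict n).le h.ge) (hstrict n).ne
  rw [Ordinal.isSuccLimit_iff, Order.isSuccPrelimit_iff_succ_lt]
  constructor
  · intro h0
    have h1 : (c 1).dom ≤ (0 : Ordinal) := by
      rw [← h0]
      exact Ordinal.le_iSup (fun n => (c n).dom) 1
    have h2 : (0 : Ordinal) ≤ (c 0).dom := zero_le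
    exact absurd (h2.trans_lt (hd 0)) (not_lt.mpr h1)
  · intro a ha
    have ha' : a < ⨆ n, (c n).dom := ha
    rw [Ordinal.lt_iSup_iff] at ha'
    obtain ⟨n, hn⟩ := ha'
    have h1 : Order.succ a ≤ (c n).dom := Order.succ_le_of_lt hn
    show Order.succ a < ⨆ n, (c n).dom
    exact h1.trans_lt ((hd n).trans_le (Ordinal.le_iSup (fun n => (c n).dom) (n + 1)))

lemma used_climit (c : ℕ → TTree) (hmono : Monotone c) {v : ℕ}
    (hv : v ∈ used (climit c hmono)) : ∃ n, v ∈ used (c n) := by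
  obtain ⟨hne, β, hβ⟩ := hv
  have hβ' : (if h : ∃ m, β < (c m).dom then (c h.choose).fn β else 0) = v := hβ
  by_cases h1 : ∃ m, β < (c m).dom
  · rw [dif_pos h1] at hβ'
    exact ⟨h1.choose, hne, β, hβ'⟩
  · rw [dif_neg h1] at hβ'
    exact absurd hβ'.symm hne

/-- Competitors above `x` using new values only from `A` and leaving infinitely
many elements of `A` unused. -/
def Comp (x : TTree) (A : Set ℕ) : Set TTree :=
  {y | x ≤ y ∧ (∀ β : Ordinal, x.dom ≤ β → y.fn β = 0 ∨ y.fn β ∈ A) ∧ (A \ used y).Infinite}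

/-- Invariant for the recursive construction. -/
def Inv (x : TTree) (A : Set ℕ) : Prop := A.Infinite ∧ 0 ∉ A ∧ A ∩ used x = ∅

lemma self_mem_Comp {x : TTree} {A : Set ℕ} (h : Inv x A) : x ∈ Comp x A := by
  obtain ⟨hInf, h0, hdisj⟩ := h
  refine ⟨le_rfl, fun β hβ => Or.inl (x.zero_outside β (not_lt.mpr hβ)), ?_⟩
  have hsub : A \ used x = A := by
    ext n
    constructor
    · exact fun hn => hn.1
    · intro hn
      refine ⟨hn, fun hu => ?_⟩
      have hmem : n ∈ A ∩ used x := ⟨hn, hu⟩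
      rw [hdisj] at hmem
      exact hmem
  rwa [hsub]

lemma exists_step_pair (g : TTree → ℝ) (hg : StrictMono g) (hb : BddAbove (Set.range g))
    (x : TTree) (A : Set ℕ) (hI : Inv x A) (ε : ℝ) (hε : 0 < ε) :
    ∃ (y : TTree) (A' : Set ℕ) (a : ℕ), Inv y A' ∧ x < y ∧ A' ⊆ A ∧
      (a ∈ A ∧ a ∉ A' ∧ a ∉ used y) ∧
      (∀ β : Ordinal, x.dom ≤ β → y.fn β = 0 ∨ y.fn β ∈ A) ∧
      sSup (g '' Comp x A) < g y + ε := by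
  obtain ⟨hInf, h0, hdisj⟩ := hI
  have hbd : BddAbove (g '' Comp x A) := hb.mono (Set.image_subset_range g _)
  obtain ⟨v, hvA⟩ := hInf.nonempty
  have hv0 : v ≠ 0 := fun h => h0 (h ▸ hvA)
  have hvu : v ∉ used x := by
    intro h
    have hmem : v ∈ A ∩ used x := ⟨hvA, h⟩
    rw [hdisj] at hmem
    exact hmem
  have hy0 : step x v hv0 hvu ∈ Comp x A := by
    refine ⟨(lt_step x v hv0 hvu).le, fun β hβ => ?_, ?_⟩
    · rcases step_fn_ge x v hv0 hvu hβ with h | h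
      · exact Or.inl h
      · exact Or.inr (by rw [h]; exact hvA)
    · have hsub : A \ {v} ⊆ A \ used (step x v hv0 hvu) := by
        intro n hn
        refine ⟨hn.1, fun hu => ?_⟩
        rcases used_step_subset x v hv0 hvu hu with h | h
        · have hmem : n ∈ A ∩ used x := ⟨hn.1, h⟩
          rw [hdisj] at hmem
          exact hmem
        · exact hn.2 h
      exact (hInf.diff (Set.finite_singleton v)).mono hsub
  have himg : (g '' Comp x A).Nonempty := ⟨g (step x v hv0 hvu), ⟨_, hy0, rfl⟩⟩
  have hgy0 : g x < g (step x v hv0 hvu) := hg (lt_step x v hv0 hvu)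
  have hlt : max (g x) (sSup (g '' Comp x A) - ε) < sSup (g '' Comp x A) := by
    apply max_lt
    · exact lt_of_lt_of_le hgy0 (le_csSup hbd ⟨_, hy0, rfl⟩)
    · linarith
  obtain ⟨r, ⟨w, hw, rfl⟩, hr⟩ := exists_lt_of_lt_csSup himg hlt
  have hgxw : g x < g w := (le_max_left _ _).trans_lt hr
  have hxw : x < w := lt_of_le_of_ne hw.1 (by rintro rfl; exact lt_irrefl _ hgxw)
  obtain ⟨hwle, hwnew, hwres⟩ := hw
  obtain ⟨a, haa⟩ := hwres.nonempty
  refine ⟨w, (A \ used w) \ {a}, a, ?_, hxw, ?_, ⟨haa.1, ?_, haa.2⟩, hwnew, ?_⟩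
  · refine ⟨(hwres.diff (Set.finite_singleton a)), ?_, ?_⟩
    · intro hmem
      exact h0 hmem.1.1
    · ext n
      constructor
      · rintro ⟨⟨⟨-, hnu⟩, -⟩, hu⟩
        exact absurd hu hnu
      · exact fun hmem => absurd hmem (Set.notMem_empty n)
  · intro n hn
    exact hn.1.1
  · intro hmem
    exact hmem.2 rfl
  · have hle2 : sSup (g '' Comp x A) - ε < g w := (le_max_right _ _).trans_lt hr
    linarith

theorem no_real_grading : ¬ ∃ g : TTree → ℝ, StrictMono g := by
  rintro ⟨g0, hg0⟩
  classical
  set g : TTree → ℝ := fun x => Real.arctan (g0 x) with hgdef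
  have hg : StrictMono g := fun u v h => Real.arctan_strictMono (hg0 h)
  have hb : BddAbove (Set.range g) := by
    refine ⟨Real.pi / 2, ?_⟩
    rintro r ⟨y, rfl⟩
    exact (Real.arctan_lt_pi_div_two _).le
  have hInv0 : Inv root ({0}ᶜ : Set ℕ) := by
    refine ⟨Set.Finite.infinite_compl (Set.finite_singleton 0), by simp, ?_⟩
    have hur : used root = ∅ := by
      ext n
      simp only [used, root, Set.mem_setOf_eq, Set.mem_empty_iff_false, iff_false]
      rintro ⟨hn, β, hβ⟩
      exact hn hβ.symm
    rw [hur, Set.inter_empty]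
  have hstep : ∀ (s : {p : TTree × Set ℕ // Inv p.1 p.2}) (n : ℕ),
      ∃ t : {p : TTree × Set ℕ // Inv p.1 p.2}, s.1.1 < t.1.1 ∧ t.1.2 ⊆ s.1.2 ∧
      (∃ a : ℕ, a ∈ s.1.2 ∧ a ∉ t.1.2 ∧ a ∉ used t.1.1) ∧
      (∀ β : Ordinal, s.1.1.dom ≤ β → t.1.1.fn β = 0 ∨ t.1.1.fn β ∈ s.1.2) ∧
      sSup (g '' Comp s.1.1 s.1.2) < g t.1.1 + 1 / (n + 1 : ℝ) := by
    intro s n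
    obtain ⟨y, A', a, hI, hlt, hsub, ⟨haA, haA', hau⟩, hnew, hsup⟩ :=
      exists_step_pair g hg hb s.1.1 s.1.2 s.2 (1 / (n + 1 : ℝ)) (by positivity)
    exact ⟨⟨(y, A'), hI⟩, hlt, hsub, ⟨a, haA, haA', hau⟩, hnew, hsup⟩
  set seq : ℕ → {p : TTree × Set ℕ // Inv p.1 p.2} :=
    fun n => Nat.rec ⟨(root, ({0}ᶜ : Set ℕ)), hInv0⟩ (fun n s => (hstep s n).choose) n with hseq
  have hspec : ∀ n : ℕ, (seq n).1.1 < (seq (n+1)).1.1 ∧ (seq (n+1)).1.2 ⊆ (seq n).1.2 ∧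
      (∃ a : ℕ, a ∈ (seq n).1.2 ∧ a ∉ (seq (n+1)).1.2 ∧ a ∉ used (seq (n+1)).1.1) ∧
      (∀ β : Ordinal, (seq n).1.1.dom ≤ β →
        (seq (n+1)).1.1.fn β = 0 ∨ (seq (n+1)).1.1.fn β ∈ (seq n).1.2) ∧
      sSup (g '' Comp (seq n).1.1 (seq n).1.2) < g (seq (n+1)).1.1 + 1 / (n + 1 : ℝ) :=
    fun n => (hstep (seq n) n).choose_spec
  set x : ℕ → TTree := fun n => (seq n).1.1 with hxdef
  set A : ℕ → Set ℕ := fun n => (seq n).1.2 with hAdef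
  have hxs : StrictMono x := strictMono_nat_of_lt_succ (fun n => (hspec n).1)
  have hxm : Monotone x := hxs.monotone
  have hA : ∀ {m n : ℕ}, m ≤ n → A n ⊆ A m := by
    intro m n h
    induction h with
    | refl => exact subset_rfl
    | step h ih => exact fun u hu => ih ((hspec _).2.1 hu)
  have haex : ∀ n, ∃ b : ℕ, b ∈ A n ∧ b ∉ A (n+1) ∧ b ∉ used (x (n+1)) :=
    fun n => (hspec n).2.2.1
  set a : ℕ → ℕ := fun n => (haex n).choose with hadef
  have ha : ∀ n, a n ∈ A n ∧ a n ∉ A (n+1) ∧ a n ∉ used (x (n+1)) :=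
    fun n => (haex n).choose_spec
  have hnewchain : ∀ n m : ℕ, n ≤ m → ∀ β : Ordinal, (x n).dom ≤ β →
      (x m).fn β = 0 ∨ (x m).fn β ∈ A n := by
    intro n m h
    refine Nat.le_induction ?_ ?_ m h
    · intro β hβ
      exact Or.inl ((x n).zero_outside β (not_lt.mpr hβ))
    · intro m hm ih β hβ
      by_cases hcase : β < (x m).dom
      · have he : (x (m+1)).fn β = (x m).fn β := fn_eq_of_le (hxm (Nat.le_succ m)) hcase
        rw [he]
        exact ih β hβ
      · rcases (hspec m).2.2.2.1 β (not_lt.mp hcase) with h0 | hAm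
        · exact Or.inl h0
        · exact Or.inr (hA hm hAm)
  have husedsub : ∀ k m : ℕ, k ≤ m → used (x m) ⊆ used (x k) ∪ A k := by
    intro k m h
    intro v hv
    obtain ⟨hv0, β, hβ⟩ := hv
    by_cases hcase : β < (x k).dom
    · left
      have he : (x m).fn β = (x k).fn β := fn_eq_of_le (hxm h) hcase
      rw [he] at hβ
      exact ⟨hv0, β, hβ⟩
    · rcases hnewchain k m h β (not_lt.mp hcase) with h0 | hAk
      · rw [hβ] at h0
        exact absurd h0 hv0
      · right
        rw [hβ] at hAk
        exact hAk
  have hanu : ∀ n m : ℕ, a n ∉ used (x m) := by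
    intro n m
    rcases le_total m (n+1) with h | h
    · exact fun hu => (ha n).2.2 (used_mono (hxm h) hu)
    · intro hu
      rcases husedsub (n+1) m h hu with h1 | h1
      · exact (ha n).2.2 h1
      · exact (ha n).2.1 h1
  have hainj : Function.Injective a := by
    have key : ∀ {m n : ℕ}, m < n → a m ≠ a n := by
      intro m n hmn heq
      have h1 : a n ∈ A n := (ha n).1
      have h2 : A n ⊆ A (m+1) := hA hmn
      have h3 : a m ∈ A (m+1) := heq ▸ h2 h1
      exact (ha m).2.1 h3
    intro m n heq
    rcases lt_trichotomy m n with h | h | h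
    · exact absurd heq (key h)
    · exact h
    · exact absurd heq.symm (key h)
  have hlim : (climit x hxm).dom = 0 ∨ Order.IsSuccLimit ((climit x hxm).dom) :=
    Or.inr (climit_dom_isLimit x hxm (fun n => (hspec n).1))
  have hzC : ∀ n, zstep (climit x hxm) hlim ∈ Comp (x n) (A n) := by
    intro n
    refine ⟨(le_climit x hxm n).trans (lt_zstep (climit x hxm) hlim).le, ?_, ?_⟩
    · intro β hβ
      show (climit x hxm).fn β = 0 ∨ (climit x hxm).fn β ∈ A n
      by_cases h1 : ∃ m, β < (x m).dom
      · obtain ⟨m, hm⟩ := h1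
        have hβk : β < (x (max m n + 1)).dom :=
          hm.trans_le (dom_mono (hxm ((le_max_left m n).trans (Nat.le_succ _))))
        have he : (climit x hxm).fn β = (x (max m n + 1)).fn β :=
          climit_fn_eq x hxm (n := max m n + 1) hβk
        rw [he]
        exact hnewchain n (max m n + 1) ((le_max_right m n).trans (Nat.le_succ _)) β hβ
      · have h2 : ¬ β < (climit x hxm).dom := by
          intro hlt
          have h3 : β < ⨆ m, (x m).dom := hlt
          rw [Ordinal.lt_iSup_iff] at h3
          exact h1 h3
        exact Or.inl ((climit x hxm).zero_outside β h2)
    · have hmem : ∀ m : ℕ, a (n + m) ∈ A n \ used (zstep (climit x hxm) hlim) := by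
        intro m
        refine ⟨hA (Nat.le_add_right n m) (ha (n+m)).1, ?_⟩
        rw [used_zstep]
        intro hu
        obtain ⟨k, hk⟩ := used_climit x hxm hu
        exact hanu (n+m) k hk
      have hinj : Function.Injective (fun m : ℕ => a (n + m)) := by
        intro p q h
        exact Nat.add_left_cancel (hainj h)
      exact Set.infinite_of_injective_forall_mem hinj hmem
  have hle : ∀ n : ℕ, g (zstep (climit x hxm) hlim) < g (climit x hxm) + 1 / (n + 1 : ℝ) := by
    intro n
    have h1 : g (zstep (climit x hxm) hlim) ≤ sSup (g '' Comp (x n) (A n)) :=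
      le_csSup (hb.mono (Set.image_subset_range g _)) ⟨_, hzC n, rfl⟩
    have h2 := (hspec n).2.2.2.2
    have h3 : g (x (n+1)) ≤ g (climit x hxm) := hg.monotone (le_climit x hxm (n+1))
    linarith
  have hzle : g (zstep (climit x hxm) hlim) ≤ g (climit x hxm) := by
    refine le_of_forall_pos_le_add ?_
    intro ε hε
    obtain ⟨n, hn⟩ := exists_nat_one_div_lt hε
    have h4 := hle n
    linarith
  exact absurd (hg (lt_zstep (climit x hxm) hlim)) (not_lt.mpr hzle)

end TTree

/-- `T` is a well-stratified tree (every branch is order-isomorphic to an ordinal)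
without uncountable branches, and `T` admits no strictly order-preserving function
into ℝ. -/
theorem stmt_13 :
    IsTreeOrder TTree ∧
      (∀ B : Set TTree, IsBranch B →
        B.Countable ∧ ∃ γ : Ordinal, Nonempty (B ≃o Set.Iio γ)) ∧
      ¬ ∃ g : TTree → ℝ, StrictMono g := by
  refine ⟨TTree.isTreeOrder, ?_, TTree.no_real_grading⟩
  intro B hB
  exact ⟨TTree.chain_countable hB.1, TTree.chain_iso hB.1⟩
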